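/- Let H be holomorphic on a neighborhood of ∞ in the closed upper half-plane, with asymptotic expansion H(w) = c·w^n + O(w^{n−1}) as |w| → ∞, where c is a nonzero real constant and n ≥ 2 an integer. Then Im H takes both positive and negative values on the part of the upper half-plane outside any sufficiently large disk. -/

import Mathlib

lemma aux_abs (s θ : ℝ) (hs : 0 ≤ s) :
    ‖(s:ℂ) * Complex.exp (θ * Complex.I)‖ = s := by
  simp [Complex.norm_exp, _root_.abs_of_nonneg hs]

lemma aux_im (s θ : ℝ) : ((s:ℂ) * Complex.exp (θ * Complex.I)).im = s * Real.sin θ := by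
  simp [Complex.exp_mul_I, ← Complex.ofReal_cos, ← Complex.ofReal_sin, Complex.mul_im]

lemma aux_im_pow (c s θ : ℝ) (n : ℕ) :
    ((c:ℂ) * ((s:ℂ) * Complex.exp (θ * Complex.I)) ^ n).im = c * (s ^ n * Real.sin (n * θ)) := by
  rw [mul_pow, ← Complex.exp_nat_mul]
  have h1 : (n:ℂ) * ((θ:ℝ) * Complex.I) = ((n * θ : ℝ):ℂ) * Complex.I := by push_cast; ring
  have h2 : ((s:ℂ)) ^ n = ((s ^ n : ℝ):ℂ) := by push_cast; ring
  rw [h1, h2, Complex.exp_mul_I, ← Complex.ofReal_cos, ← Complex.ofReal_sin]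
  simp only [Complex.mul_im, Complex.mul_re, Complex.add_im, Complex.add_re,
    Complex.ofReal_re, Complex.ofReal_im, Complex.I_re, Complex.I_im]
  ring

/-- Key pointwise lemma: at `w = s·e^{iθ}`, if the leading term has positive
imaginary part dominating the error, then `Im H(w) > 0`. -/
lemma aux_point (H : ℂ → ℂ) (c C s θ : ℝ) (n : ℕ) (hn : 1 ≤ n) (hs : 0 < s)
    (hθ1 : 0 < θ) (hθ2 : θ < Real.pi)
    (hcs : C < c * Real.sin (n * θ) * s)
    (hb : ‖H ((s:ℂ) * Complex.exp (θ * Complex.I)) -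
        (c:ℂ) * ((s:ℂ) * Complex.exp (θ * Complex.I)) ^ n‖ ≤ C * s ^ (n - 1)) :
    0 < (H ((s:ℂ) * Complex.exp (θ * Complex.I))).im := by
  set w : ℂ := (s:ℂ) * Complex.exp (θ * Complex.I) with hw
  have h1 : |(H w - (c:ℂ) * w ^ n).im| ≤ C * s ^ (n - 1) :=
    le_trans (Complex.abs_im_le_norm _) hb
  rw [Complex.sub_im] at h1
  have himc : ((c:ℂ) * w ^ n).im = c * (s ^ n * Real.sin (n * θ)) := aux_im_pow c s θ n
  have hp : 0 < s ^ (n - 1) := pow_pos hs _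
  have hsn : s ^ n = s ^ (n - 1) * s := by
    rw [← pow_succ]; congr 1; omega
  rw [himc] at h1
  have habs := abs_le.mp h1
  have key : 0 < s ^ (n - 1) * (c * Real.sin (n * θ) * s - C) :=
    mul_pos hp (sub_pos.mpr hcs)
  have e : c * (s ^ n * Real.sin (n * θ)) - C * s ^ (n - 1)
      = s ^ (n - 1) * (c * Real.sin (n * θ) * s - C) := by rw [hsn]; ring
  linarith [habs.1]

/-- If `H` is holomorphic on a neighborhood of `∞` in the closed upper half-plane
with `H(w) = c·w^n + O(w^{n−1})` for a nonzero real constant `c` and integer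
`n ≥ 2`, then `Im H` takes both positive and negative values on the part of the
upper half-plane outside any sufficiently large disk. -/
theorem stmt_13 (H : ℂ → ℂ) (c : ℝ) (hc : c ≠ 0) (n : ℕ) (hn : 2 ≤ n) (R : ℝ)
    (hH : DifferentiableOn ℂ H {w : ℂ | 0 ≤ w.im ∧ R < ‖w‖})
    (hbound : ∃ C R₁ : ℝ, R ≤ R₁ ∧ ∀ w : ℂ, 0 ≤ w.im → R₁ < ‖w‖ →
      ‖H w - (c : ℂ) * w ^ n‖ ≤ C * ‖w‖ ^ (n - 1)) :
    ∃ R₀ : ℝ, R ≤ R₀ ∧ ∀ r : ℝ, R₀ ≤ r →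
      ∃ w₁ w₂ : ℂ, 0 < w₁.im ∧ r < ‖w₁‖ ∧ 0 < w₂.im ∧ r < ‖w₂‖ ∧
        0 < (H w₁).im ∧ (H w₂).im < 0 := by
  obtain ⟨C, R₁, hRR₁, hC⟩ := hbound
  have hcabs : 0 < |c| := abs_pos.mpr hc
  refine ⟨max R R₁, le_max_left _ _, ?_⟩
  intro r hr
  set s : ℝ := max r (max R₁ (|C| / |c|)) + 1 with hs_def
  have hsr : r < s := lt_of_le_of_lt (le_max_left _ _) (lt_add_one _)
  have hsR₁ : R₁ < s :=
    lt_of_le_of_lt (le_trans (le_max_left _ _) (le_max_right _ _)) (lt_add_one _)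
  have hsC : |C| / |c| < s :=
    lt_of_le_of_lt (le_trans (le_max_right _ _) (le_max_right _ _)) (lt_add_one _)
  have hs0 : 0 < s :=
    lt_of_le_of_lt (div_nonneg (abs_nonneg _) (abs_nonneg _))
      (lt_of_le_of_lt (le_trans (le_max_right _ _) (le_max_right _ _)) (lt_add_one _))
  have hCs : C < |c| * s := by
    have := (div_lt_iff₀ hcabs).mp hsC
    calc C ≤ |C| := le_abs_self C
    _ < s * |c| := this
    _ = |c| * s := by ring
  have hn0 : (0:ℝ) < (n:ℝ) := by positivity
  have hπ := Real.pi_pos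
  -- the two angles
  set θ₁ : ℝ := Real.pi / (2 * n) with hθ₁def
  set θ₂ : ℝ := 3 * Real.pi / (2 * n) with hθ₂def
  have hθ₁pos : 0 < θ₁ := by positivity
  have hθ₂pos : 0 < θ₂ := by positivity
  have hn2 : (2:ℝ) ≤ (n:ℝ) := by exact_mod_cast hn
  have hθ₁lt : θ₁ < Real.pi := by
    rw [hθ₁def, div_lt_iff₀ (by positivity)]
    nlinarith
  have hθ₂lt : θ₂ < Real.pi := by
    rw [hθ₂def, div_lt_iff₀ (by positivity)]
    nlinarith
  have hsin₁ : Real.sin ((n:ℝ) * θ₁) = 1 := by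
    rw [hθ₁def, show (n:ℝ) * (Real.pi / (2 * n)) = Real.pi / 2 by
      field_simp]
    exact Real.sin_pi_div_two
  have hsin₂ : Real.sin ((n:ℝ) * θ₂) = -1 := by
    rw [hθ₂def, show (n:ℝ) * (3 * Real.pi / (2 * n)) = 3 * Real.pi / 2 by
      field_simp]
    rw [show (3:ℝ) * Real.pi / 2 = Real.pi - (-(Real.pi / 2)) by ring, Real.sin_pi_sub]
    simp
  have hn1 : 1 ≤ n := le_trans (by norm_num) hn
  -- pick angles according to the sign of c
  -- θp : angle where Im(c w^n) = |c| s^n  (positive), θm : where it is -|c| s^n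
  obtain ⟨θp, θm, hθp1, hθp2, hθm1, hθm2, hsinp, hsinm⟩ :
      ∃ θp θm : ℝ, 0 < θp ∧ θp < Real.pi ∧ 0 < θm ∧ θm < Real.pi ∧
        c * Real.sin ((n:ℝ) * θp) = |c| ∧ c * Real.sin ((n:ℝ) * θm) = -|c| := by
    rcases hc.lt_or_gt with h | h
    · exact ⟨θ₂, θ₁, hθ₂pos, hθ₂lt, hθ₁pos, hθ₁lt, by rw [hsin₂, abs_of_neg h]; ring,
        by rw [hsin₁, abs_of_neg h]; ring⟩
    · exact ⟨θ₁, θ₂, hθ₁pos, hθ₁lt, hθ₂pos, hθ₂lt, by rw [hsin₁, abs_of_pos h]; ring,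
        by rw [hsin₂, abs_of_pos h]; ring⟩
  refine ⟨(s:ℂ) * Complex.exp (θp * Complex.I), (s:ℂ) * Complex.exp (θm * Complex.I),
    ?_, ?_, ?_, ?_, ?_, ?_⟩
  · rw [aux_im]
    exact mul_pos hs0 (Real.sin_pos_of_pos_of_lt_pi hθp1 hθp2)
  · rw [aux_abs s θp hs0.le]; exact hsr
  · rw [aux_im]
    exact mul_pos hs0 (Real.sin_pos_of_pos_of_lt_pi hθm1 hθm2)
  · rw [aux_abs s θm hs0.le]; exact hsr
  · have him₁ : (0:ℝ) ≤ ((s:ℂ) * Complex.exp (θp * Complex.I)).im := by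
      rw [aux_im]
      exact (mul_pos hs0 (Real.sin_pos_of_pos_of_lt_pi hθp1 hθp2)).le
    have hb₁ := hC _ him₁ (by rw [aux_abs s θp hs0.le]; exact hsR₁)
    rw [aux_abs s θp hs0.le] at hb₁
    exact aux_point H c C s θp n hn1 hs0 hθp1 hθp2 (by rw [hsinp]; exact hCs) hb₁
  · have him₂ : (0:ℝ) ≤ ((s:ℂ) * Complex.exp (θm * Complex.I)).im := by
      rw [aux_im]
      exact (mul_pos hs0 (Real.sin_pos_of_pos_of_lt_pi hθm1 hθm2)).le
    have hb₂ := hC _ him₂ (by rw [aux_abs s θm hs0.le]; exact hsR₁)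
    rw [aux_abs s θm hs0.le] at hb₂
    have hb₂' : ‖(fun z => -H z) ((s:ℂ) * Complex.exp (θm * Complex.I)) -
        ((-c : ℝ):ℂ) * ((s:ℂ) * Complex.exp (θm * Complex.I)) ^ n‖ ≤ C * s ^ (n - 1) := by
      have heq : (fun z => -H z) ((s:ℂ) * Complex.exp (θm * Complex.I)) -
          ((-c : ℝ):ℂ) * ((s:ℂ) * Complex.exp (θm * Complex.I)) ^ n
          = -(H ((s:ℂ) * Complex.exp (θm * Complex.I)) -
              (c:ℝ) * ((s:ℂ) * Complex.exp (θm * Complex.I)) ^ n) := by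
        push_cast; ring
      rw [heq, norm_neg]
      exact hb₂
    have hneg : C < (-c) * Real.sin ((n:ℝ) * θm) * s := by
      have h' : (-c) * Real.sin ((n:ℝ) * θm) = |c| := by linarith [hsinm]
      rw [h']; exact hCs
    have hfin := aux_point (fun z => -H z) (-c) C s θm n hn1 hs0 hθm1 hθm2 hneg hb₂'
    simp only [Complex.neg_im] at hfin
    linarith
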